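/- arXiv:1701.06807 — 12 statements merged into one kernel-verified Lean document; each statement's English description precedes it below -/
import Mathlib

section
/- Fix n ≥ 1 and κ ≥ 1. For each player i, let Φ_i be the real matrix with rows indexed by Fin κ and columns indexed by strategy profiles x : Fin n → Fin κ, whose (a,x) entry is 1 if a = x i and 0 otherwise (this is the coordinate form of Φ_i = 1ᵀ_{κ^{i−1}} ⊗ I_κ ⊗ 1ᵀ_{κ^{n−i}}). For any σ ∈ Equiv.Perm (Fin n), the iterated Khatri–Rao product T_σ := Φ_{σ⁻¹(1)} ∗ Φ_{σ⁻¹(2)} ∗ ⋯ ∗ Φ_{σ⁻¹(n)}, with its row index type Fin κ × (Fin κ × ⋯) identified with the profile type Fin n → Fin κ in the canonical way, satisfies: for every profile x, T_σ maps the standard basis vector e_x to the standard basis vector e_{x∘σ⁻¹}; equivalently, the (y,x) entry of T_σ is 1 if y = x∘σ⁻¹ and 0 otherwise. -/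
open Matrix

/-- with `Φ i` the matrix whose `(a,x)` entry is `1` iff `a = x i`,
the iterated Khatri–Rao product `T_σ = Φ_{σ⁻¹(1)} ∗ ⋯ ∗ Φ_{σ⁻¹(n)}` (whose
`(y,x)` entry, under the canonical identification of the row index with
profiles, is `∏ i, Φ (σ⁻¹ i) (y i) x`) maps each standard basis vector `e_x`
to `e_{x ∘ σ⁻¹}`; equivalently its `(y,x)` entry is `1` if `y = x ∘ σ⁻¹` and
`0` otherwise. -/
theorem stmt3 (n κ : ℕ) (hn : 1 ≤ n) (hκ : 1 ≤ κ) (σ : Equiv.Perm (Fin n))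
    (Φ : Fin n → Matrix (Fin κ) (Fin n → Fin κ) ℝ)
    (hΦ : ∀ (i : Fin n) (a : Fin κ) (x : Fin n → Fin κ),
      Φ i a x = if a = x i then 1 else 0) :
    (∀ x : Fin n → Fin κ,
      (Matrix.of fun y z : Fin n → Fin κ => ∏ i, Φ (σ⁻¹ i) (y i) z).mulVec
          (fun z => if z = x then 1 else 0)
        = fun y => if y = x ∘ ⇑σ.symm then (1 : ℝ) else 0) ∧
    (∀ y x : Fin n → Fin κ,
      (∏ i, Φ (σ⁻¹ i) (y i) x) = if y = x ∘ ⇑σ.symm then 1 else 0) := by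
  have key : ∀ y x : Fin n → Fin κ,
      (∏ i, Φ (σ⁻¹ i) (y i) x) = if y = x ∘ ⇑σ.symm then 1 else 0 := by
    intro y x
    simp only [hΦ]
    split_ifs with h
    · refine Finset.prod_eq_one fun i _ => ?_
      rw [if_pos]
      exact congrFun h i
    · obtain ⟨i, hi⟩ : ∃ i, y i ≠ x (σ⁻¹ i) := by
        by_contra hc
        push_neg at hc
        exact h (funext hc)
      exact Finset.prod_eq_zero (Finset.mem_univ i) (if_neg hi)
  refine ⟨fun x => ?_, key⟩
  funext y
  simp only [mulVec, dotProduct, of_apply, mul_ite, mul_one, mul_zero,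
    Finset.sum_ite_eq' , Finset.mem_univ, if_true]
  exact key y x
end

section
/- Fix n ≥ 1 and κ ≥ 1 and let c : Fin n → ((Fin n → Fin κ) → ℝ) be a finite game. Then c is ordinary symmetric if and only if for every σ ∈ Equiv.Perm (Fin n) the row vector V_G satisfies V_G · (P_σ ⊗ T_σ) = V_G (multiplication of the row vector on the left of the Kronecker product matrix). -/
open Matrix Kronecker

/-- The `n×n` permutation matrix of `σ`: `(i,j)` entry is `1` if `i = σ j`. -/
def permMat (n : ℕ) (σ : Equiv.Perm (Fin n)) : Matrix (Fin n) (Fin n) ℝ :=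
  Matrix.of fun i j => if i = σ j then 1 else 0

/-- The permutation matrix `T_σ` on strategy profiles: `(y,x)` entry is `1` if
`y = x ∘ σ⁻¹`. -/
def profMat (n κ : ℕ) (σ : Equiv.Perm (Fin n)) :
    Matrix (Fin n → Fin κ) (Fin n → Fin κ) ℝ :=
  Matrix.of fun y x => if y = x ∘ ⇑σ.symm then 1 else 0

lemma key (n κ : ℕ) (σ : Equiv.Perm (Fin n)) (c : Fin n → (Fin n → Fin κ) → ℝ)
    (p : Fin n × (Fin n → Fin κ)) :
    Matrix.vecMul (fun p : Fin n × (Fin n → Fin κ) => c p.1 p.2)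
        (permMat n σ ⊗ₖ profMat n κ σ) p = c (σ p.1) (p.2 ∘ ⇑σ.symm) := by
  obtain ⟨j, y⟩ := p
  simp only [Matrix.vecMul, dotProduct, Matrix.kroneckerMap_apply,
    permMat, profMat, Matrix.of_apply]
  rw [Fintype.sum_prod_type]
  rw [Finset.sum_eq_single (σ j)]
  · rw [Finset.sum_eq_single (y ∘ ⇑σ.symm)]
    · simp
    · intro b _ hb; simp [hb, if_neg (Ne.symm hb)]
    · simp
  · intro b _ hb
    apply Finset.sum_eq_zero
    intro x _
    simp [hb]
  · simp

/-- a finite game `c` is ordinary symmetric iff its structure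
vector `V_G` satisfies `V_G · (P_σ ⊗ T_σ) = V_G` for every `σ`. -/
theorem stmt5 (n κ : ℕ) (hn : 1 ≤ n) (hκ : 1 ≤ κ)
    (c : Fin n → (Fin n → Fin κ) → ℝ) :
    (∀ (σ : Equiv.Perm (Fin n)) (i : Fin n) (x : Fin n → Fin κ),
        c i x = c (σ i) (x ∘ ⇑σ.symm)) ↔
    (∀ σ : Equiv.Perm (Fin n),
      Matrix.vecMul (fun p : Fin n × (Fin n → Fin κ) => c p.1 p.2)
          (permMat n σ ⊗ₖ profMat n κ σ)
        = fun p : Fin n × (Fin n → Fin κ) => c p.1 p.2) := by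

  constructor
  · intro h σ
    funext p
    rw [key]
    exact (h σ p.1 p.2).symm
  · intro h σ i x
    have := congrFun (h σ) (i, x)
    rw [key] at this
    exact this.symm
end

section
/- Fix n ≥ 1, κ ≥ 1, and positive weights μ : Fin n → ℝ (μ i > 0 for all i); let Γ be the n×n diagonal matrix with diagonal entries μ_1,…,μ_n. Then: (1) the map φ^μ(σ) := (Γ · P_σ · Γ⁻¹) ⊗ T_σ is a linear representation of the symmetric group, i.e. φ^μ(μ' ∘ σ) = φ^μ(μ') · φ^μ(σ) for all μ', σ ∈ Equiv.Perm (Fin n) and each φ^μ(σ) is invertible; (2) a finite game c : Fin n → ((Fin n → Fin κ) → ℝ) is weighted symmetric with respect to μ if and only if V_G · φ^μ(σ) = V_G for every σ ∈ Equiv.Perm (Fin n). -/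
open Matrix Kronecker

/-- `φ^μ(σ) = (Γ P_σ Γ⁻¹) ⊗ T_σ` where `Γ = diag(μ)`. -/
noncomputable def phiW (n κ : ℕ) (μ : Fin n → ℝ) (σ : Equiv.Perm (Fin n)) :
    Matrix (Fin n × (Fin n → Fin κ)) (Fin n × (Fin n → Fin κ)) ℝ :=
  (Matrix.diagonal μ * permMat n σ * (Matrix.diagonal μ)⁻¹) ⊗ₖ profMat n κ σ

lemma diag_inv (n : ℕ) (μ : Fin n → ℝ) (hμ : ∀ i, μ i ≠ 0) :
    (Matrix.diagonal μ)⁻¹ = Matrix.diagonal (fun i => (μ i)⁻¹) := by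
  apply Matrix.inv_eq_right_inv
  rw [Matrix.diagonal_mul_diagonal]
  convert Matrix.diagonal_one
  exact mul_inv_cancel₀ (hμ _)

lemma phiW_apply (n κ : ℕ) (μ : Fin n → ℝ) (hμ : ∀ i, μ i ≠ 0) (σ : Equiv.Perm (Fin n))
    (p q : Fin n × (Fin n → Fin κ)) :
    phiW n κ μ σ p q =
      (if p.1 = σ q.1 then μ p.1 * (μ q.1)⁻¹ else 0) *
      (if p.2 = q.2 ∘ ⇑σ.symm then 1 else 0) := by
  obtain ⟨i, y⟩ := p
  obtain ⟨j, x⟩ := q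
  simp only [phiW, kroneckerMap_apply, diag_inv n μ hμ,
    Matrix.mul_diagonal, Matrix.diagonal_mul, permMat, profMat, Matrix.of_apply,
    mul_ite, ite_mul, one_mul, mul_one, zero_mul, mul_zero]

lemma phiW_mul (n κ : ℕ) (μ : Fin n → ℝ) (hμ : ∀ i, μ i ≠ 0)
    (μ' σ : Equiv.Perm (Fin n)) :
    phiW n κ μ (μ' * σ) = phiW n κ μ μ' * phiW n κ μ σ := by
  ext p q
  rw [Matrix.mul_apply]
  have hz : ∀ r, r ≠ (σ q.1, q.2 ∘ ⇑σ.symm) →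
      phiW n κ μ μ' p r * phiW n κ μ σ r q = 0 := by
    rintro ⟨a, b⟩ hr
    rw [phiW_apply n κ μ hμ, phiW_apply n κ μ hμ]
    by_cases h1 : a = σ q.1 <;> by_cases h2 : b = q.2 ∘ ⇑σ.symm <;>
      simp_all [Prod.ext_iff]
  rw [Fintype.sum_eq_single _ hz, phiW_apply n κ μ hμ, phiW_apply n κ μ hμ,
    phiW_apply n κ μ hμ]
  have e1 : (μ' * σ) q.1 = μ' (σ q.1) := rfl
  have e2 : q.2 ∘ ⇑(μ' * σ).symm = (q.2 ∘ ⇑σ.symm) ∘ ⇑μ'.symm := by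
    funext z; rfl
  rw [e1, e2]
  by_cases h1 : p.1 = μ' (σ q.1) <;>
    by_cases h2 : p.2 = (q.2 ∘ ⇑σ.symm) ∘ ⇑μ'.symm <;>
    simp [h1, h2]
  rw [mul_assoc, inv_mul_cancel_left₀ (hμ (σ q.1))]

lemma phiW_one (n κ : ℕ) (μ : Fin n → ℝ) (hμ : ∀ i, μ i ≠ 0) :
    phiW n κ μ 1 = 1 := by
  ext p q
  rw [phiW_apply n κ μ hμ, Matrix.one_apply]
  have e2 : q.2 ∘ ⇑(1 : Equiv.Perm (Fin n)).symm = q.2 := rfl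
  rw [e2]
  by_cases h1 : p.1 = q.1 <;> by_cases h2 : p.2 = q.2 <;>
    simp_all [Prod.ext_iff, Equiv.Perm.one_apply, mul_inv_cancel₀ (hμ q.1)]

lemma vecMul_phiW (n κ : ℕ) (μ : Fin n → ℝ) (hμ : ∀ i, μ i ≠ 0)
    (σ : Equiv.Perm (Fin n)) (c : Fin n → (Fin n → Fin κ) → ℝ)
    (j : Fin n) (x : Fin n → Fin κ) :
    Matrix.vecMul (fun p : Fin n × (Fin n → Fin κ) => c p.1 p.2) (phiW n κ μ σ) (j, x)
      = c (σ j) (x ∘ ⇑σ.symm) * (μ (σ j) * (μ j)⁻¹) := by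
  simp only [Matrix.vecMul, dotProduct]
  have hz : ∀ r, r ≠ (σ j, x ∘ ⇑σ.symm) →
      c r.1 r.2 * phiW n κ μ σ r (j, x) = 0 := by
    rintro ⟨a, b⟩ hr
    rw [phiW_apply n κ μ hμ]
    by_cases h1 : a = σ j <;> by_cases h2 : b = x ∘ ⇑σ.symm <;>
      simp_all [Prod.ext_iff]
  rw [Fintype.sum_eq_single _ hz, phiW_apply n κ μ hμ]
  simp

/-- (1) `φ^μ` is a linear representation of the symmetric group;
(2) a game `c` is weighted symmetric w.r.t. the positive weights `μ` iff
`V_G · φ^μ(σ) = V_G` for all `σ`. -/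
theorem stmt6 (n κ : ℕ) (hn : 1 ≤ n) (hκ : 1 ≤ κ)
    (μ : Fin n → ℝ) (hμ : ∀ i, 0 < μ i) :
    ((∀ μ' σ : Equiv.Perm (Fin n),
        phiW n κ μ (μ' * σ) = phiW n κ μ μ' * phiW n κ μ σ) ∧
      (∀ σ : Equiv.Perm (Fin n), IsUnit (phiW n κ μ σ))) ∧
    (∀ c : Fin n → (Fin n → Fin κ) → ℝ,
      (∀ (σ : Equiv.Perm (Fin n)) (i : Fin n) (x : Fin n → Fin κ),
          μ i * c i x = μ (σ i) * c (σ i) (x ∘ ⇑σ.symm)) ↔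
      (∀ σ : Equiv.Perm (Fin n),
        Matrix.vecMul (fun p : Fin n × (Fin n → Fin κ) => c p.1 p.2) (phiW n κ μ σ)
          = fun p : Fin n × (Fin n → Fin κ) => c p.1 p.2)) := by
  have hne : ∀ i, μ i ≠ 0 := fun i => (hμ i).ne'
  refine ⟨⟨phiW_mul n κ μ hne, fun σ => ?_⟩, fun c => ⟨fun h σ => ?_, fun h σ i x => ?_⟩⟩
  · exact ⟨⟨phiW n κ μ σ, phiW n κ μ σ⁻¹,
      by rw [← phiW_mul n κ μ hne, mul_inv_cancel, phiW_one n κ μ hne],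
      by rw [← phiW_mul n κ μ hne, inv_mul_cancel, phiW_one n κ μ hne]⟩, rfl⟩
  · funext p
    obtain ⟨j, x⟩ := p
    rw [vecMul_phiW n κ μ hne]
    have hk := h σ j x
    have h0 := hne j
    field_simp
    linear_combination -hk
  · have hk := congrFun (h σ) (i, x)
    rw [vecMul_phiW n κ μ hne] at hk
    have h0 := hne i
    field_simp at hk
    linear_combination -hk
end

section
/- Fix n ≥ 1, κ ≥ 1, and a renaming r : Fin n → Equiv.Perm (Fin κ). Let Γ_r be the real permutation matrix, with rows and columns indexed by strategy profiles Fin n → Fin κ, whose (y,x) entry is 1 if y = (fun j => r j (x j)) and 0 otherwise (this is the Kronecker product P_{r_1} ⊗ ⋯ ⊗ P_{r_n} under the canonical identification of index types), and for σ ∈ Equiv.Perm (Fin n) set T^r_σ := Γ_rᵀ · T_σ · Γ_r. Then a finite game c : Fin n → ((Fin n → Fin κ) → ℝ) is renaming symmetric with renaming r if and only if V_G · (P_σ ⊗ T^r_σ) = V_G for every σ ∈ Equiv.Perm (Fin n). -/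
open Matrix Kronecker

/-- The renaming matrix `Γ_r` on strategy profiles: `(y,x)` entry is `1` if
`y = (fun j => r j (x j))` (i.e. `Γ_r = P_{r_1} ⊗ ⋯ ⊗ P_{r_n}` under the
canonical identification of index types). -/
def renMat (n κ : ℕ) (r : Fin n → Equiv.Perm (Fin κ)) :
    Matrix (Fin n → Fin κ) (Fin n → Fin κ) ℝ :=
  Matrix.of fun y x => if y = fun j => r j (x j) then 1 else 0

lemma renProf (n κ : ℕ) (r : Fin n → Equiv.Perm (Fin κ)) (σ : Equiv.Perm (Fin n)) :
    (renMat n κ r)ᵀ * profMat n κ σ * renMat n κ r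
      = Matrix.of fun x y =>
          if x = fun j => (r j)⁻¹ (r (σ.symm j) (y (σ.symm j))) then 1 else 0 := by
  ext x y
  simp only [Matrix.mul_apply, renMat, profMat, Matrix.transpose_apply, Matrix.of_apply,
    mul_ite, ite_mul, mul_one, mul_zero, one_mul, zero_mul, Finset.sum_ite_eq,
    Finset.sum_ite_eq', Finset.mem_univ, if_true]
  refine if_congr ?_ rfl rfl
  simp [funext_iff, Function.comp, eq_comm, Equiv.Perm.inv_def, Equiv.eq_symm_apply]

lemma vecMulEntry (n κ : ℕ) (r : Fin n → Equiv.Perm (Fin κ))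
    (σ : Equiv.Perm (Fin n)) (c : Fin n → (Fin n → Fin κ) → ℝ)
    (p : Fin n × (Fin n → Fin κ)) :
    Matrix.vecMul (fun p : Fin n × (Fin n → Fin κ) => c p.1 p.2)
        (permMat n σ ⊗ₖ ((renMat n κ r)ᵀ * profMat n κ σ * renMat n κ r)) p
      = c (σ p.1) (fun j => (r j)⁻¹ (r (σ.symm j) (p.2 (σ.symm j)))) := by
  rw [renProf]
  obtain ⟨j, y⟩ := p
  simp [Matrix.vecMul, dotProduct, Fintype.sum_prod_type, kroneckerMap_apply,
    permMat, mul_ite, ite_mul, mul_one, mul_zero, Finset.sum_ite_eq, Finset.sum_ite_eq']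

/-- a finite game `c` is renaming symmetric with renaming `r`
(i.e. the renamed game `c^r i x = c i (fun j => (r j)⁻¹ (x j))` is ordinary
symmetric) iff `V_G · (P_σ ⊗ T^r_σ) = V_G` for every `σ`, where
`T^r_σ = Γ_rᵀ · T_σ · Γ_r`. -/
theorem stmt7 (n κ : ℕ) (hn : 1 ≤ n) (hκ : 1 ≤ κ)
    (r : Fin n → Equiv.Perm (Fin κ)) (c : Fin n → (Fin n → Fin κ) → ℝ) :
    (∀ (σ : Equiv.Perm (Fin n)) (i : Fin n) (x : Fin n → Fin κ),
        c i (fun j => (r j)⁻¹ (x j))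
          = c (σ i) (fun j => (r j)⁻¹ ((x ∘ ⇑σ.symm) j))) ↔
    (∀ σ : Equiv.Perm (Fin n),
      Matrix.vecMul (fun p : Fin n × (Fin n → Fin κ) => c p.1 p.2)
          (permMat n σ ⊗ₖ ((renMat n κ r)ᵀ * profMat n κ σ * renMat n κ r))
        = fun p : Fin n × (Fin n → Fin κ) => c p.1 p.2) := by
  have key : ∀ σ : Equiv.Perm (Fin n),
      (Matrix.vecMul (fun p : Fin n × (Fin n → Fin κ) => c p.1 p.2)
          (permMat n σ ⊗ₖ ((renMat n κ r)ᵀ * profMat n κ σ * renMat n κ r))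
        = fun p : Fin n × (Fin n → Fin κ) => c p.1 p.2)
      ↔ ∀ (j : Fin n) (y : Fin n → Fin κ),
          c (σ j) (fun k => (r k)⁻¹ (r (σ.symm k) (y (σ.symm k)))) = c j y := by
    intro σ
    rw [funext_iff]
    constructor
    · intro h j y
      have := h (j, y)
      rwa [vecMulEntry] at this
    · intro h p
      rw [vecMulEntry]
      exact h p.1 p.2
  simp only [key]
  constructor
  · intro h σ j y
    have := h σ j (fun k => r k (y k))
    simp only [Function.comp, Equiv.Perm.inv_def, Equiv.symm_apply_apply] at this
    exact this.symm
  · intro h σ i x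
    have := h σ i (fun k => (r k)⁻¹ (x k))
    simp only [Equiv.Perm.inv_def, Equiv.apply_symm_apply] at this
    simpa [Function.comp] using this.symm
end

section
/- Fix n ≥ 1, strategy-set sizes k : Fin n → ℕ with k i ≥ 1, payoff functions c : Fin n → ((∀ i, Fin (k i)) → ℝ), and weights w : Fin n → ℝ with w i > 0. Write 1 for the first player (the index 0 of Fin n), and for a profile s let s_{−i} denote the restriction of s to the coordinates j ≠ i. Then c is a weighted potential game with weights w if and only if there exist functions ξ_i : ({j // j ≠ i} → Fin (k j)) → ℝ for each i, such that for every player i ≠ 1 and every profile s, w_1 · c i s − w_i · c 1 s = w_1 · ξ_i (s_{−i}) − w_i · ξ_1 (s_{−1}). Moreover, when such ξ exist, the function P(s) := (1 / w_1) · (c 1 s − ξ_1 (s_{−1})) is a weighted potential function for c with weights w. -/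
/-- Extend a restricted profile to a full profile by playing strategy `0` at `i`. -/
def stmt11ext {n : ℕ} {k : Fin n → ℕ} (hk : ∀ i, 1 ≤ k i) (i : Fin n)
    (r : ∀ j : {j : Fin n // j ≠ i}, Fin (k j.1)) : ∀ j, Fin (k j) :=
  fun j => if h : j ≠ i then r ⟨j, h⟩ else ⟨0, hk j⟩

theorem stmt11ext_agree {n : ℕ} {k : Fin n → ℕ} (hk : ∀ i, 1 ≤ k i) (i : Fin n)
    (s : ∀ j, Fin (k j)) (j : Fin n) (h : j ≠ i) :
    stmt11ext hk i (fun j => s j.1) j = s j := by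
  simp [stmt11ext, h]

/-- potential equation: `c` is a weighted potential game with
weights `w` iff there exist functions `ξ i` of the profile restricted away
from coordinate `i` such that for every player `i ≠ 1` (player `1` being the
index `0` of `Fin n`) and every profile `s`,
`w 1 * c i s - w i * c 1 s = w 1 * ξ i (s_{-i}) - w i * ξ 1 (s_{-1})`.
Moreover, given such `ξ`, `P s := (1 / w 1) * (c 1 s - ξ 1 (s_{-1}))` is a
weighted potential function. -/
theorem stmt11 (n : ℕ) (hn : 1 ≤ n) (k : Fin n → ℕ) (hk : ∀ i, 1 ≤ k i)
    (c : Fin n → ((∀ i, Fin (k i)) → ℝ)) (w : Fin n → ℝ) (hw : ∀ i, 0 < w i) :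
    ((∃ P : (∀ i, Fin (k i)) → ℝ,
        ∀ (i : Fin n) (s t : ∀ i, Fin (k i)), (∀ j, j ≠ i → s j = t j) →
          c i s - c i t = w i * (P s - P t)) ↔
      (∃ ξ : ∀ i : Fin n, ((∀ j : {j : Fin n // j ≠ i}, Fin (k j.1)) → ℝ),
        ∀ i : Fin n, i ≠ ⟨0, hn⟩ → ∀ s : ∀ i, Fin (k i),
          w ⟨0, hn⟩ * c i s - w i * c ⟨0, hn⟩ s
            = w ⟨0, hn⟩ * ξ i (fun j => s j.1)
              - w i * ξ ⟨0, hn⟩ (fun j => s j.1))) ∧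
    (∀ ξ : ∀ i : Fin n, ((∀ j : {j : Fin n // j ≠ i}, Fin (k j.1)) → ℝ),
      (∀ i : Fin n, i ≠ ⟨0, hn⟩ → ∀ s : ∀ i, Fin (k i),
        w ⟨0, hn⟩ * c i s - w i * c ⟨0, hn⟩ s
          = w ⟨0, hn⟩ * ξ i (fun j => s j.1)
            - w i * ξ ⟨0, hn⟩ (fun j => s j.1)) →
      ∀ (i : Fin n) (s t : ∀ i, Fin (k i)), (∀ j, j ≠ i → s j = t j) →
        c i s - c i t
          = w i * ((1 / w ⟨0, hn⟩) * (c ⟨0, hn⟩ s - ξ ⟨0, hn⟩ (fun j => s j.1))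
              - (1 / w ⟨0, hn⟩) * (c ⟨0, hn⟩ t - ξ ⟨0, hn⟩ (fun j => t j.1)))) := by
  have h0 : w ⟨0, hn⟩ ≠ 0 := (hw _).ne'
  have key : ∀ ξ : ∀ i : Fin n, ((∀ j : {j : Fin n // j ≠ i}, Fin (k j.1)) → ℝ),
      (∀ i : Fin n, i ≠ ⟨0, hn⟩ → ∀ s : ∀ i, Fin (k i),
        w ⟨0, hn⟩ * c i s - w i * c ⟨0, hn⟩ s
          = w ⟨0, hn⟩ * ξ i (fun j => s j.1)
            - w i * ξ ⟨0, hn⟩ (fun j => s j.1)) →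
      ∀ (i : Fin n) (s t : ∀ i, Fin (k i)), (∀ j, j ≠ i → s j = t j) →
        c i s - c i t
          = w i * ((1 / w ⟨0, hn⟩) * (c ⟨0, hn⟩ s - ξ ⟨0, hn⟩ (fun j => s j.1))
              - (1 / w ⟨0, hn⟩) * (c ⟨0, hn⟩ t - ξ ⟨0, hn⟩ (fun j => t j.1))) := by
    intro ξ hξ i s t hst
    by_cases hi : i = ⟨0, hn⟩
    · subst hi
      have hr : (fun j : {j : Fin n // j ≠ (⟨0, hn⟩ : Fin n)} => s j.1)
          = (fun j : {j : Fin n // j ≠ (⟨0, hn⟩ : Fin n)} => t j.1) := by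
        funext j; exact hst j.1 j.2
      rw [hr]
      field_simp
      ring
    · have hs := hξ i hi s
      have ht := hξ i hi t
      have hrw : ξ i (fun j => s j.1) = ξ i (fun j => t j.1) := by
        congr 1; funext j; exact hst j.1 j.2
      have goal' : w ⟨0, hn⟩ * (c i s - c i t)
          = w i * ((c ⟨0, hn⟩ s - ξ ⟨0, hn⟩ (fun j => s j.1))
              - (c ⟨0, hn⟩ t - ξ ⟨0, hn⟩ (fun j => t j.1))) := by
        linear_combination hs - ht + w ⟨0, hn⟩ * hrw
      field_simp
      linear_combination goal'
  refine ⟨⟨?_, fun ⟨ξ, hξ⟩ => ⟨_, key ξ hξ⟩⟩, key⟩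
  rintro ⟨P, hP⟩
  refine ⟨fun i r => c i (stmt11ext hk i r) - w i * P (stmt11ext hk i r), ?_⟩
  intro i hi s
  have aux : ∀ m : Fin n, c m s - w m * P s
      = c m (stmt11ext hk m (fun j => s j.1))
        - w m * P (stmt11ext hk m (fun j => s j.1)) := by
    intro m
    have := hP m s (stmt11ext hk m (fun j => s j.1))
      (fun j hj => (stmt11ext_agree hk m s j hj).symm)
    linear_combination this
  have h1 := aux i
  have h2 := aux ⟨0, hn⟩
  linear_combination w ⟨0, hn⟩ * h1 - w i * h2
end

section
/- Fix n ≥ 1, κ ≥ 1, a finite game c : Fin n → ((Fin n → Fin κ) → ℝ), and positive weights μ : Fin n → ℝ (μ i > 0 for all i). Then c is weighted symmetric with respect to μ if and only if for all players i, j and all profiles x, y such that x i = y j and the multiset of values {x k : k ≠ i} equals the multiset of values {y k : k ≠ j}, one has μ_i · c i x = μ_j · c j y. -/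
lemma Equiv.Perm.map_univ_val {n : ℕ} (σ : Equiv.Perm (Fin n)) :
    Finset.univ.val.map (σ : Fin n → Fin n) = Finset.univ.val := by
  have : Finset.univ.map σ.toEmbedding = Finset.univ := Finset.map_univ_equiv σ
  simpa [Finset.map] using congrArg Finset.val this

/-- Two tuples with equal multisets of values differ by a permutation. -/
lemma exists_perm_comp {n κ : ℕ} (x y : Fin n → Fin κ)
    (h : Finset.univ.val.map x = Finset.univ.val.map y) :
    ∃ τ : Equiv.Perm (Fin n), y ∘ τ = x := by
  have hx : (Multiset.ofList (List.ofFn (x ∘ Tuple.sort x))) =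
      Multiset.ofList (List.ofFn (y ∘ Tuple.sort y)) := by
    rw [← Fin.univ_val_map, ← Fin.univ_val_map]
    calc Finset.univ.val.map (x ∘ Tuple.sort x)
        = (Finset.univ.val.map (Tuple.sort x : Fin n → Fin n)).map x := by
          rw [Multiset.map_map]
      _ = Finset.univ.val.map x := by
          congr 1
          exact Equiv.Perm.map_univ_val (Tuple.sort x)
      _ = Finset.univ.val.map y := h
      _ = (Finset.univ.val.map (Tuple.sort y : Fin n → Fin n)).map y := by
          congr 1
          exact ((Equiv.Perm.map_univ_val (Tuple.sort y))).symm
      _ = Finset.univ.val.map (y ∘ Tuple.sort y) := by rw [Multiset.map_map]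
  have hperm : List.Perm (List.ofFn (x ∘ Tuple.sort x)) (List.ofFn (y ∘ Tuple.sort y)) := by
    exact Quotient.exact hx
  have heq : x ∘ Tuple.sort x = y ∘ Tuple.sort y := by
    apply List.ofFn_injective
    exact List.Perm.eq_of_sortedLE
      (Tuple.monotone_sort x).sortedLE_ofFn (Tuple.monotone_sort y).sortedLE_ofFn hperm
  refine ⟨(Tuple.sort x).symm.trans (Tuple.sort y), ?_⟩
  funext k
  have := congrFun heq ((Tuple.sort x).symm k)
  simpa using this.symm

/-- a finite game `c` is weighted symmetric with respect to
positive weights `μ` iff for all players `i, j` and profiles `x, y` with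
`x i = y j` and equal multisets of opponents' strategies
(`{x k : k ≠ i} = {y k : k ≠ j}` as multisets), one has
`μ i * c i x = μ j * c j y`. -/
theorem stmt12 (n κ : ℕ) (hn : 1 ≤ n) (hκ : 1 ≤ κ)
    (c : Fin n → (Fin n → Fin κ) → ℝ) (μ : Fin n → ℝ) (hμ : ∀ i, 0 < μ i) :
    (∀ (σ : Equiv.Perm (Fin n)) (i : Fin n) (x : Fin n → Fin κ),
        μ i * c i x = μ (σ i) * c (σ i) (x ∘ ⇑σ.symm)) ↔
    (∀ (i j : Fin n) (x y : Fin n → Fin κ),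
        x i = y j →
        (Finset.univ.erase i).val.map x = (Finset.univ.erase j).val.map y →
        μ i * c i x = μ j * c j y) := by
  constructor
  · intro h i j x y hxy hmul
    -- full multisets are equal
    have hfull : Finset.univ.val.map x = Finset.univ.val.map y := by
      have hi : Finset.univ.val = i ::ₘ (Finset.univ.erase i).val := by
        rw [Finset.erase_val]
        exact (Multiset.cons_erase (Finset.mem_univ_val i)).symm
      have hj : Finset.univ.val = j ::ₘ (Finset.univ.erase j).val := by
        rw [Finset.erase_val]
        exact (Multiset.cons_erase (Finset.mem_univ_val j)).symm
      have e1 : Finset.univ.val.map x = x i ::ₘ (Finset.univ.erase i).val.map x := by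
        rw [hi, Multiset.map_cons]
      have e2 : Finset.univ.val.map y = y j ::ₘ (Finset.univ.erase j).val.map y := by
        rw [hj, Multiset.map_cons]
      rw [e1, e2, hmul, hxy]
    obtain ⟨τ, hτ⟩ := exists_perm_comp x y hfull
    set σ : Equiv.Perm (Fin n) := τ.trans (Equiv.swap (τ i) j) with hσ
    have hyτi : y (τ i) = y j := by
      have := congrFun hτ i
      simp only [Function.comp_apply] at this
      rw [this, hxy]
    have hyσ : ∀ k, y (σ k) = x k := by
      intro k
      have hk := congrFun hτ k
      simp only [Function.comp_apply] at hk
      simp only [hσ, Equiv.trans_apply]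
      rcases eq_or_ne (τ k) (τ i) with h1 | h1
      · rw [h1, Equiv.swap_apply_left, ← hyτi, ← h1]; exact hk
      · rcases eq_or_ne (τ k) j with h2 | h2
        · rw [h2, Equiv.swap_apply_right, hyτi, ← h2]; exact hk
        · rw [Equiv.swap_apply_of_ne_of_ne h1 h2, hk]
    have hσi : σ i = j := by simp [hσ]
    have hcomp : x ∘ ⇑σ.symm = y := by
      funext m
      have := hyσ (σ.symm m)
      simpa using this.symm
    have := h σ i x
    rw [hσi, hcomp] at this
    exact this
  · intro h σ i x
    apply h i (σ i) x (x ∘ ⇑σ.symm)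
    · simp
    · have step1 : (Finset.univ.erase (σ i)).val.map (⇑σ.symm) =
          (Finset.univ.erase i).val := by
        rw [Finset.erase_val, Finset.erase_val,
          Multiset.map_erase _ σ.symm.injective]
        rw [Equiv.Perm.map_univ_val σ.symm]
        simp
      calc (Finset.univ.erase i).val.map x
          = ((Finset.univ.erase (σ i)).val.map (⇑σ.symm)).map x := by rw [step1]
        _ = (Finset.univ.erase (σ i)).val.map (x ∘ ⇑σ.symm) := by
            rw [Multiset.map_map]
end

section
/- Fix n ≥ 1, κ ≥ 1, and a finite game c : Fin n → ((Fin n → Fin κ) → ℝ); write 1 for the first player. For each player i let γ_i ∈ Equiv.Perm (Fin n) be the cycle defined (in 1-based notation) by γ_i(1) = i, γ_i(j) = j − 1 for 2 ≤ j ≤ i, and γ_i(j) = j for j > i. Then c is ordinary symmetric if and only if both of the following hold: (i) for every permutation τ ∈ Equiv.Perm (Fin n) fixing the first player and every profile x, c 1 (x ∘ τ) = c 1 x; (ii) for every player i and every profile x, c i x = c 1 (x ∘ γ_i). -/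
/-- `c` is ordinary symmetric iff (i) `c 1` is invariant under
every permutation of the players fixing player `1` (the index `0` of `Fin n`),
and (ii) `c i x = c 1 (x ∘ γ_i)` for every `i`, where `γ_i` is the cycle with
`γ_i(1) = i`, `γ_i(j) = j - 1` for `2 ≤ j ≤ i` (in 1-based notation) and
`γ_i(j) = j` for `j > i`. -/
theorem stmt13 (n κ : ℕ) (hn : 1 ≤ n) (hκ : 1 ≤ κ)
    (c : Fin n → (Fin n → Fin κ) → ℝ)
    (γ : Fin n → Equiv.Perm (Fin n))
    (hγ : ∀ i j : Fin n, γ i j =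
      if (j : ℕ) = 0 then i
      else if (j : ℕ) ≤ (i : ℕ) then
        ⟨(j : ℕ) - 1, lt_of_le_of_lt (Nat.sub_le _ _) j.isLt⟩
      else j) :
    (∀ (σ : Equiv.Perm (Fin n)) (i : Fin n) (x : Fin n → Fin κ),
        c i x = c (σ i) (x ∘ ⇑σ.symm)) ↔
    ((∀ τ : Equiv.Perm (Fin n), τ ⟨0, hn⟩ = ⟨0, hn⟩ →
        ∀ x : Fin n → Fin κ, c ⟨0, hn⟩ (x ∘ ⇑τ) = c ⟨0, hn⟩ x) ∧
      (∀ (i : Fin n) (x : Fin n → Fin κ), c i x = c ⟨0, hn⟩ (x ∘ ⇑(γ i)))) := by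
  have h0 : ∀ i : Fin n, γ i ⟨0, hn⟩ = i := by
    intro i; rw [hγ]; simp
  have h0' : ∀ i : Fin n, (γ i).symm i = ⟨0, hn⟩ := by
    intro i; rw [Equiv.symm_apply_eq]; exact (h0 i).symm
  constructor
  · intro h
    constructor
    · intro τ hτ x
      have := h τ ⟨0, hn⟩ (x ∘ τ)
      rw [hτ] at this
      have hfun : (x ∘ ⇑τ) ∘ ⇑(Equiv.symm τ) = x := by
        funext j; simp
      rw [hfun] at this
      exact this
    · intro i x
      have := h (γ i) ⟨0, hn⟩ (x ∘ ⇑(γ i))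
      rw [h0] at this
      have hfun : (x ∘ ⇑(γ i)) ∘ ⇑(Equiv.symm (γ i)) = x := by
        funext j; simp
      rw [hfun] at this
      exact this.symm
  · rintro ⟨h1, h2⟩ σ i x
    rw [h2 i x, h2 (σ i) (x ∘ ⇑σ.symm)]
    have hτ : ((γ (σ i)).trans (σ.symm.trans (γ i).symm)) ⟨0, hn⟩ = ⟨0, hn⟩ := by
      simp [h0, h0']
    have := h1 _ hτ (x ∘ ⇑(γ i))
    have hfun : (x ∘ ⇑(γ i)) ∘ ⇑((γ (σ i)).trans (σ.symm.trans (γ i).symm))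
        = (x ∘ ⇑σ.symm) ∘ ⇑(γ (σ i)) := by
      funext j; simp
    rw [hfun] at this
    exact this.symm
end

section
/- For every n ≥ 1, the set of ordinary symmetric Boolean games with n players, i.e. the set of families c : Fin n → ((Fin n → Fin 2) → ℝ) satisfying c i x = c (σ i) (x ∘ σ⁻¹) for all σ ∈ Equiv.Perm (Fin n), all players i and all profiles x, is a linear subspace of the real vector space of all families Fin n → ((Fin n → Fin 2) → ℝ), and its dimension (finrank over ℝ) equals 2n. -/
namespace Stmt14Aux

open Finset

variable {n : ℕ}

/-- number of players other than `i` playing `1` -/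
def cnt (i : Fin n) (x : Fin n → Fin 2) : ℕ :=
  (Finset.univ.filter fun j => j ≠ i ∧ x j = 1).card

lemma cnt_lt (i : Fin n) (x : Fin n → Fin 2) : cnt i x < n := by
  have h : (Finset.univ.filter fun j => j ≠ i ∧ x j = 1) ⊆ Finset.univ.erase i := by
    intro j hj
    simp only [mem_filter] at hj
    exact Finset.mem_erase.2 ⟨hj.2.1, Finset.mem_univ j⟩
  have h1 := Finset.card_le_card h
  have h2 : (Finset.univ.erase i).card = n - 1 := by
    rw [Finset.card_erase_of_mem (Finset.mem_univ i)]; simp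
  have h3 : 0 < n := i.pos
  unfold cnt
  omega

lemma fin2_ne_one_iff (v : Fin 2) : ¬ v = 1 ↔ v = 0 := by omega

lemma card_fiber_one (i : Fin n) (x : Fin n → Fin 2) :
    (Finset.univ.filter fun j => x j = 1 ∧ ¬ j = i).card = cnt i x := by
  rw [cnt]
  congr 1
  ext j
  simp [and_comm]

lemma card_filter_ne (i : Fin n) :
    (Finset.univ.filter fun j : Fin n => j ≠ i).card = n - 1 := by
  rw [Finset.filter_ne', Finset.card_erase_of_mem (Finset.mem_univ i)]
  simp

lemma card_fiber_zero (i : Fin n) (x : Fin n → Fin 2) :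
    (Finset.univ.filter fun j => x j = 0 ∧ ¬ j = i).card = n - 1 - cnt i x := by
  have key := Finset.card_filter_add_card_filter_not
    (s := Finset.univ.filter fun j : Fin n => j ≠ i) (p := fun j => x j = 1)
  rw [Finset.filter_filter, Finset.filter_filter, card_filter_ne] at key
  have e0 : (Finset.univ.filter fun j : Fin n => j ≠ i ∧ ¬ x j = 1)
      = Finset.univ.filter fun j => x j = 0 ∧ ¬ j = i := by
    ext j
    simp [fin2_ne_one_iff, and_comm]
  have e1 : (Finset.univ.filter fun j : Fin n => j ≠ i ∧ x j = 1).card = cnt i x := rfl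
  rw [e0, e1] at key
  omega

lemma card_fiber_other (i : Fin n) (x : Fin n → Fin 2) (b : Fin 2) :
    (Finset.univ.filter fun j => x j = b ∧ ¬ j = i).card
      = if b = 1 then cnt i x else n - 1 - cnt i x := by
  split_ifs with hb
  · subst hb; exact card_fiber_one i x
  · have hb0 : b = 0 := (fin2_ne_one_iff b).1 hb
    subst hb0
    exact card_fiber_zero i x

lemma card_fiber_self (i : Fin n) (x : Fin n → Fin 2) (b : Fin 2) :
    (Finset.univ.filter fun j => x j = b ∧ j = i).card = if x i = b then 1 else 0 := by
  split_ifs with h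
  · have : (Finset.univ.filter fun j => x j = b ∧ j = i) = {i} := by
      ext j
      simp only [mem_filter, mem_univ, true_and, Finset.mem_singleton]
      constructor
      · rintro ⟨-, rfl⟩; rfl
      · rintro rfl; exact ⟨h, rfl⟩
    rw [this, Finset.card_singleton]
  · have : (Finset.univ.filter fun j => x j = b ∧ j = i) = ∅ := by
      ext j
      simp only [mem_filter, mem_univ, true_and, Finset.notMem_empty, iff_false]
      rintro ⟨hb, rfl⟩
      exact h hb
    rw [this, Finset.card_empty]

/-- key invariance lemma: a symmetric game's payoff depends only on own move and
the number of ones among the other players. -/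
lemma key_eq {c : Fin n → (Fin n → Fin 2) → ℝ}
    (hc : ∀ (σ : Equiv.Perm (Fin n)) (i : Fin n) (x : Fin n → Fin 2),
      c i x = c (σ i) (x ∘ ⇑σ.symm))
    {i i' : Fin n} {x y : Fin n → Fin 2}
    (h1 : x i = y i') (h2 : cnt i x = cnt i' y) : c i x = c i' y := by
  classical
  set X : Fin n → Fin 2 × Bool := fun j => (x j, decide (j = i)) with hXdef
  set Y : Fin n → Fin 2 × Bool := fun j => (y j, decide (j = i')) with hYdef
  have hfib : ∀ p : Fin 2 × Bool,
      Fintype.card {j // X j = p} = Fintype.card {j // Y j = p} := by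
    rintro ⟨b, t⟩
    rw [Fintype.card_subtype, Fintype.card_subtype]
    cases t
    · simp only [hXdef, hYdef, Prod.mk.injEq, decide_eq_false_iff_not]
      rw [card_fiber_other, card_fiber_other, h2]
    · simp only [hXdef, hYdef, Prod.mk.injEq, decide_eq_true_eq]
      rw [card_fiber_self, card_fiber_self, h1]
  have e : ∀ p, {j // X j = p} ≃ {j // Y j = p} := fun p => Fintype.equivOfCardEq (hfib p)
  let σ : Equiv.Perm (Fin n) := Equiv.ofFiberEquiv e
  have hσ : ∀ j, Y (σ j) = X j := fun j => Equiv.ofFiberEquiv_map e j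
  have hσ1 : ∀ j, y (σ j) = x j := fun j => congrArg Prod.fst (hσ j)
  have hσ2 : ∀ j, (σ j = i') ↔ (j = i) := by
    intro j
    have := congrArg Prod.snd (hσ j)
    simpa [hXdef, hYdef, decide_eq_decide] using this
  have hσi : σ i = i' := (hσ2 i).2 rfl
  have hxy : y = x ∘ ⇑σ.symm := by
    funext j
    show y j = x (σ.symm j)
    rw [← hσ1 (σ.symm j), Equiv.apply_symm_apply]
  rw [hc σ i x, hσi, ← hxy]

def game (f : Fin 2 × Fin n → ℝ) : Fin n → (Fin n → Fin 2) → ℝ :=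
  fun i x => f (x i, ⟨cnt i x, cnt_lt i x⟩)

def Ψ : (Fin 2 × Fin n → ℝ) →ₗ[ℝ] (Fin n → (Fin n → Fin 2) → ℝ) where
  toFun := game
  map_add' _ _ := rfl
  map_smul' _ _ := rfl

lemma cnt_perm (σ : Equiv.Perm (Fin n)) (i : Fin n) (x : Fin n → Fin 2) :
    cnt (σ i) (x ∘ ⇑σ.symm) = cnt i x := by
  have hx : cnt (σ i) (x ∘ ⇑σ.symm)
      = Fintype.card {j : Fin n // j ≠ σ i ∧ x (σ.symm j) = 1} :=
    (Fintype.card_subtype _).symm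
  have hy : cnt i x = Fintype.card {j : Fin n // j ≠ i ∧ x j = 1} :=
    (Fintype.card_subtype _).symm
  rw [hx, hy]
  apply Fintype.card_congr
  refine Equiv.subtypeEquiv σ.symm fun j => ?_
  constructor
  · rintro ⟨hj, hv⟩
    refine ⟨fun h => hj ?_, hv⟩
    rw [← h, Equiv.apply_symm_apply]
  · rintro ⟨hj, hv⟩
    refine ⟨fun h => hj ?_, hv⟩
    rw [h, Equiv.symm_apply_apply]

lemma game_symm (f : Fin 2 × Fin n → ℝ) (σ : Equiv.Perm (Fin n)) (i : Fin n)
    (x : Fin n → Fin 2) : game f i x = game f (σ i) (x ∘ ⇑σ.symm) := by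
  unfold game
  congr 1
  refine Prod.ext ?_ (Fin.ext ?_)
  · simp
  · exact (cnt_perm σ i x).symm

section std

variable [NeZero n]

def std (a : Fin 2) (k : Fin n) : Fin n → Fin 2 :=
  fun j => if j = 0 then a else if j ≤ k then 1 else 0

lemma std_zero (a : Fin 2) (k : Fin n) : std a k 0 = a := if_pos rfl

lemma cnt_std (a : Fin 2) (k : Fin n) : cnt 0 (std a k) = (k : ℕ) := by
  rw [cnt]
  have h : (Finset.univ.filter fun j => j ≠ 0 ∧ std a k j = 1) = Finset.Ioc 0 k := by
    ext j
    rw [mem_filter]; simp only [mem_univ, true_and, Finset.mem_Ioc, std]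
    constructor
    · rintro ⟨hj0, hj⟩
      rw [if_neg hj0] at hj
      by_cases hk : j ≤ k
      · exact ⟨(Fin.pos_iff_ne_zero' j).2 hj0, hk⟩
      · rw [if_neg hk] at hj
        exact absurd hj (by decide)
    · rintro ⟨h0, hk⟩
      have hj0 : j ≠ 0 := (Fin.pos_iff_ne_zero' j).1 h0
      rw [if_neg hj0, if_pos hk]
      exact ⟨hj0, rfl⟩
  rw [h, Fin.card_Ioc]
  simp

lemma key_std (a : Fin 2) (k : Fin n) :
    ((std a k 0 : Fin 2), (⟨cnt 0 (std a k), cnt_lt 0 (std a k)⟩ : Fin n)) = (a, k) := by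
  refine Prod.ext (std_zero a k) (Fin.ext ?_)
  exact cnt_std a k

lemma Ψ_inj : Function.Injective (Ψ (n := n)) := by
  intro f g h
  funext p
  obtain ⟨a, k⟩ := p
  have h0 := congrFun (congrFun h 0) (std a k)
  change game f 0 (std a k) = game g 0 (std a k) at h0
  unfold game at h0
  rwa [key_std] at h0

lemma symm_mem_range {c : Fin n → (Fin n → Fin 2) → ℝ}
    (hc : ∀ (σ : Equiv.Perm (Fin n)) (i : Fin n) (x : Fin n → Fin 2),
      c i x = c (σ i) (x ∘ ⇑σ.symm)) :
    c = game (fun p => c 0 (std p.1 p.2)) := by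
  funext i x
  show c i x = c 0 (std (x i) ⟨cnt i x, cnt_lt i x⟩)
  apply key_eq hc
  · exact (std_zero _ _).symm
  · exact (cnt_std (x i) ⟨cnt i x, cnt_lt i x⟩).symm

end std

end Stmt14Aux

/-- the ordinary symmetric Boolean games with `n` players form a
linear subspace of the real vector space `Fin n → ((Fin n → Fin 2) → ℝ)` of
all Boolean games, of dimension `2n`. -/
theorem stmt14 (n : ℕ) (hn : 1 ≤ n) :
    ∃ S : Submodule ℝ (Fin n → (Fin n → Fin 2) → ℝ),
      (∀ c : Fin n → (Fin n → Fin 2) → ℝ,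
        c ∈ S ↔ ∀ (σ : Equiv.Perm (Fin n)) (i : Fin n) (x : Fin n → Fin 2),
          c i x = c (σ i) (x ∘ ⇑σ.symm)) ∧
      Module.finrank ℝ S = 2 * n := by
  haveI : NeZero n := ⟨by omega⟩
  refine ⟨LinearMap.range (Stmt14Aux.Ψ (n := n)), fun c => ?_, ?_⟩
  · constructor
    · rintro ⟨f, rfl⟩ σ i x
      exact Stmt14Aux.game_symm f σ i x
    · intro hc
      exact ⟨fun p => c 0 (Stmt14Aux.std (n := n) p.1 p.2),
        (Stmt14Aux.symm_mem_range hc).symm⟩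
  · rw [LinearMap.finrank_range_of_inj (Stmt14Aux.Ψ_inj (n := n)),
      Module.finrank_fintype_fun_eq_card]
    simp [Fintype.card_prod, two_mul]
end

section
/- Every ordinary symmetric Boolean game is an exact potential game: if n ≥ 1 and c : Fin n → ((Fin n → Fin 2) → ℝ) satisfies c i x = c (σ i) (x ∘ σ⁻¹) for every σ ∈ Equiv.Perm (Fin n), player i, and profile x, then there exists P : (Fin n → Fin 2) → ℝ such that for every player i and all profiles x, y with x j = y j for all j ≠ i, c i x − c i y = P x − P y. -/
open Finset

section aux

variable {n : ℕ} (c : Fin n → (Fin n → Fin 2) → ℝ)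

/-- Key symmetry lemma: the payoff of player `i` depends only on `x i` and on the
number of other players playing `1`. -/
lemma stmt15_key
    (hsym : ∀ (σ : Equiv.Perm (Fin n)) (i : Fin n) (x : Fin n → Fin 2),
      c i x = c (σ i) (x ∘ ⇑σ.symm))
    (i i' : Fin n) (x x' : Fin n → Fin 2)
    (hii : x i = x' i')
    (hcnt : (univ.filter fun j => j ≠ i ∧ x j = 1).card
          = (univ.filter fun j => j ≠ i' ∧ x' j = 1).card) :
    c i x = c i' x' := by
  classical
  set p : Fin n → Prop := fun j => j ≠ i ∧ x j = 1 with hp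
  set q : Fin n → Prop := fun j => j ≠ i' ∧ x' j = 1 with hq
  have hcard : Fintype.card {j // p j} = Fintype.card {j // q j} := by
    simp only [Fintype.card_subtype]
    simpa using hcnt
  let e : {j // p j} ≃ {j // q j} := Fintype.equivOfCardEq hcard
  let σ₁ : Equiv.Perm (Fin n) := e.extendSubtype
  have hpi : ¬ p i := by simp [hp]
  have hqi' : ¬ q i' := by simp [hq]
  have hq1i : ¬ q (σ₁ i) := by
    intro h
    exact (Equiv.extendSubtype_not_mem e i hpi) h
  let σ : Equiv.Perm (Fin n) := σ₁.trans (Equiv.swap (σ₁ i) i')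
  have hσi : σ i = i' := by simp [σ, Equiv.swap_apply_left]
  -- for j with p j, σ j satisfies q
  have hσp : ∀ j, p j → q (σ j) := by
    intro j hj
    have h1 : q (σ₁ j) := Equiv.extendSubtype_mem e j hj
    have hne1 : σ₁ j ≠ σ₁ i := fun h => hq1i (h ▸ h1)
    have hne2 : σ₁ j ≠ i' := fun h => hqi' (h ▸ h1)
    simpa [σ, Equiv.swap_apply_of_ne_of_ne hne1 hne2] using h1
  -- for j ≠ i with ¬ p j, σ j ≠ i' and ¬ q (σ j)
  have hσnp : ∀ j, j ≠ i → ¬ p j → (σ j ≠ i' ∧ ¬ q (σ j)) := by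
    intro j hji hj
    have hji' : σ j ≠ i' := by
      rw [← hσi]; exact fun h => hji (σ.injective h)
    refine ⟨hji', ?_⟩
    have h1 : ¬ q (σ₁ j) := Equiv.extendSubtype_not_mem e j hj
    by_cases hc : σ₁ j = σ₁ i
    · exact absurd (σ₁.injective hc) hji
    · by_cases hc2 : σ₁ j = i'
      · simpa [σ, hc2, Equiv.swap_apply_right] using hq1i
      · simpa [σ, Equiv.swap_apply_of_ne_of_ne hc hc2] using h1
  -- x' (σ j) = x j for all j
  have hx' : ∀ j, x' (σ j) = x j := by
    intro j
    by_cases hji : j = i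
    · subst hji; rw [hσi, ← hii]
    · by_cases hxj : x j = 1
      · have := hσp j ⟨hji, hxj⟩
        rw [this.2, hxj]
      · have h := hσnp j hji (fun h => hxj h.2)
        have h2 : x' (σ j) ≠ 1 := fun hh => h.2 ⟨h.1, hh⟩
        omega
  have hcomp : x ∘ ⇑σ.symm = x' := by
    funext j'
    have := hx' (σ.symm j')
    simpa using this.symm
  calc c i x = c (σ i) (x ∘ ⇑σ.symm) := hsym σ i x
    _ = c i' x' := by rw [hσi, hcomp]

end aux

/-- every ordinary symmetric Boolean game is an exact potential
game. -/
theorem stmt15 (n : ℕ) (hn : 1 ≤ n) (c : Fin n → (Fin n → Fin 2) → ℝ)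
    (hsym : ∀ (σ : Equiv.Perm (Fin n)) (i : Fin n) (x : Fin n → Fin 2),
      c i x = c (σ i) (x ∘ ⇑σ.symm)) :
    ∃ P : (Fin n → Fin 2) → ℝ,
      ∀ (i : Fin n) (x y : Fin n → Fin 2), (∀ j, j ≠ i → x j = y j) →
        c i x - c i y = P x - P y := by
  classical
  set i₀ : Fin n := ⟨0, hn⟩ with hi₀
  -- canonical profile: player i₀ plays a, players 1..k play 1, rest play 0
  set prof : Fin 2 → ℕ → (Fin n → Fin 2) :=
    fun a k j => if j = i₀ then a else if j.val ≤ k then 1 else 0 with hprof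
  set cnt : (Fin n → Fin 2) → ℕ := fun x => (univ.filter fun j => x j = 1).card with hcntdef
  set cntO : Fin n → (Fin n → Fin 2) → ℕ :=
    fun i x => (univ.filter fun j => j ≠ i ∧ x j = 1).card with hcntOdef
  -- the count among others of a canonical profile
  have hprofcnt : ∀ (a : Fin 2) (k : ℕ), k < n → cntO i₀ (prof a k) = k := by
    intro a k hk
    have hset : (univ.filter fun j : Fin n => j ≠ i₀ ∧ prof a k j = 1)
        = univ.filter fun j : Fin n => 1 ≤ j.val ∧ j.val ≤ k := by
      apply filter_congr
      intro j _
      constructor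
      · rintro ⟨hji, hj1⟩
        have hv : j.val ≠ 0 := fun h => hji (Fin.ext h)
        simp only [hprof, if_neg hji] at hj1
        by_cases hle : j.val ≤ k
        · exact ⟨Nat.one_le_iff_ne_zero.mpr hv, hle⟩
        · simp [hle] at hj1
      · rintro ⟨h1, h2⟩
        have hji : j ≠ i₀ := by
          intro h; rw [h] at h1; simp [hi₀] at h1
        exact ⟨hji, by simp [hprof, if_neg hji, h2]⟩
    simp only [hcntOdef, hset]
    have hIcc : (Finset.Icc 1 k).card = k := by rw [Nat.card_Icc]; omega
    conv_rhs => rw [← hIcc]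
    apply Finset.card_bij (fun j _ => j.val)
    · intro j hj
      simp only [mem_filter, mem_univ, true_and] at hj
      simp [mem_Icc, hj.1, hj.2]
    · intro a ha b hb hab
      exact Fin.ext hab
    · intro m hm
      simp only [mem_Icc] at hm
      exact ⟨⟨m, lt_of_le_of_lt hm.2 hk⟩, by simp [mem_Icc, hm.1, hm.2], rfl⟩
  -- bound on cntO
  have hcntO_lt : ∀ (i : Fin n) (x : Fin n → Fin 2), cntO i x < n := by
    intro i x
    have hsub : (univ.filter fun j => j ≠ i ∧ x j = 1) ⊂ univ := by
      rw [Finset.ssubset_univ_iff]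
      intro h
      have : i ∈ univ.filter fun j => j ≠ i ∧ x j = 1 := by
        rw [h]; exact mem_univ i
      simp at this
    simpa using Finset.card_lt_card hsub
  -- relation between cnt and cntO
  have hcnt1 : ∀ (i : Fin n) (x : Fin n → Fin 2), x i = 1 → cnt x = cntO i x + 1 := by
    intro i x hxi
    have : (univ.filter fun j => x j = 1)
        = insert i (univ.filter fun j => j ≠ i ∧ x j = 1) := by
      ext j
      simp only [mem_filter, mem_univ, true_and, mem_insert]
      constructor
      · intro h
        by_cases hji : j = i
        · exact Or.inl hji
        · exact Or.inr ⟨hji, h⟩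
      · rintro (h | h)
        · rw [h]; exact hxi
        · exact h.2
    rw [hcntdef]
    simp only [this]
    rw [Finset.card_insert_of_notMem (by simp)]
  have hcnt0 : ∀ (i : Fin n) (x : Fin n → Fin 2), x i ≠ 1 → cnt x = cntO i x := by
    intro i x hxi
    have : (univ.filter fun j => x j = 1)
        = univ.filter fun j => j ≠ i ∧ x j = 1 := by
      apply filter_congr
      intro j _
      constructor
      · intro h
        refine ⟨fun hji => hxi (hji ▸ h), h⟩
      · exact fun h => h.2
    rw [hcntdef, hcntOdef]
    simp only [this]
  -- same others ⇒ same cntO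
  have hcntO_eq : ∀ (i : Fin n) (x y : Fin n → Fin 2), (∀ j, j ≠ i → x j = y j) →
      cntO i x = cntO i y := by
    intro i x y h
    simp only [hcntOdef]
    congr 1
    apply filter_congr
    intro j _
    constructor
    · rintro ⟨hji, hxj⟩; exact ⟨hji, (h j hji) ▸ hxj⟩
    · rintro ⟨hji, hyj⟩; exact ⟨hji, (h j hji).symm ▸ hyj⟩
  -- the potential
  refine ⟨fun x => ∑ t ∈ Finset.range (cnt x), (c i₀ (prof 1 t) - c i₀ (prof 0 t)), ?_⟩
  -- main step for x i = 1, y i = 0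
  have main : ∀ (i : Fin n) (x y : Fin n → Fin 2), (∀ j, j ≠ i → x j = y j) →
      x i = 1 → y i = 0 →
      c i x - c i y =
        (∑ t ∈ Finset.range (cnt x), (c i₀ (prof 1 t) - c i₀ (prof 0 t))) -
        ∑ t ∈ Finset.range (cnt y), (c i₀ (prof 1 t) - c i₀ (prof 0 t)) := by
    intro i x y h hxi hyi
    set k := cntO i x with hk
    have hkn : k < n := hcntO_lt i x
    have hky : cntO i y = k := (hcntO_eq i x y h).symm
    have hcx : cnt x = k + 1 := hcnt1 i x hxi
    have hcy : cnt y = k := by rw [hcnt0 i y (by rw [hyi]; decide), hky]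
    have hc1 : c i x = c i₀ (prof 1 k) := by
      apply stmt15_key c hsym
      · rw [hxi]; simp [hprof]
      · show cntO i x = cntO i₀ (prof 1 k)
        exact hk.symm.trans (hprofcnt 1 k hkn).symm
    have hc0 : c i y = c i₀ (prof 0 k) := by
      apply stmt15_key c hsym
      · rw [hyi]; simp [hprof]
      · show cntO i y = cntO i₀ (prof 0 k)
        exact hky.trans (hprofcnt 0 k hkn).symm
    rw [hcx, hcy, Finset.sum_range_succ, hc1, hc0]
    ring
  intro i x y h
  have hx2 : x i = 0 ∨ x i = 1 := by omega
  have hy2 : y i = 0 ∨ y i = 1 := by omega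
  rcases hx2 with hx | hx <;> rcases hy2 with hy | hy
  · have : x = y := by
      funext j
      by_cases hji : j = i
      · rw [hji, hx, hy]
      · exact h j hji
    rw [this]; ring
  · have := main i y x (fun j hj => (h j hj).symm) hy hx
    linarith
  · exact main i x y h hx hy
  · have : x = y := by
      funext j
      by_cases hji : j = i
      · rw [hji, hx, hy]
      · exact h j hji
    rw [this]; ring
end

section
/- Every weighted symmetric Boolean game is a weighted potential game with weights the reciprocals of the symmetry weights: if n ≥ 1, μ : Fin n → ℝ with μ i > 0 for all i, and c : Fin n → ((Fin n → Fin 2) → ℝ) satisfies μ_i · c i x = μ_{σ i} · c (σ i) (x ∘ σ⁻¹) for every σ ∈ Equiv.Perm (Fin n), player i, and profile x, then there exists P : (Fin n → Fin 2) → ℝ such that for every player i and all profiles x, y with x j = y j for all j ≠ i, c i x − c i y = (1 / μ_i) · (P x − P y). -/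
open Finset

private lemma card_lt_aux (n k : ℕ) (hk : k ≤ n) :
    (univ.filter (fun l : Fin n => (l : ℕ) < k)).card = k := by
  classical
  have h : ∀ m ∈ Finset.range k, m < n := fun m hm =>
    lt_of_lt_of_le (Finset.mem_range.mp hm) hk
  have : univ.filter (fun l : Fin n => (l : ℕ) < k) = (Finset.range k).attachFin h := by
    ext l
    simp [Finset.mem_attachFin]
  rw [this, Finset.card_attachFin, Finset.card_range]

private lemma aux_eq (n : ℕ) (μ : Fin n → ℝ)
    (c : Fin n → (Fin n → Fin 2) → ℝ)
    (hsym : ∀ (σ : Equiv.Perm (Fin n)) (i : Fin n) (x : Fin n → Fin 2),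
      μ i * c i x = μ (σ i) * c (σ i) (x ∘ ⇑σ.symm))
    (i j : Fin n) (x y : Fin n → Fin 2)
    (hb : x i = y j)
    (hk : (univ.filter (fun l => l ≠ i ∧ x l = 1)).card
        = (univ.filter (fun l => l ≠ j ∧ y l = 1)).card) :
    μ i * c i x = μ j * c j y := by
  classical
  set f : Fin n → Fin 3 := fun l => if l = i then 0 else if x l = 1 then 1 else 2 with hf
  set f' : Fin n → Fin 3 := fun l => if l = j then 0 else if y l = 1 then 1 else 2 with hf'
  have e0 : ∀ l, f l = 0 ↔ l = i := by
    intro l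
    by_cases h : l = i
    · simp [hf, h]
    · simp only [hf, if_neg h]
      constructor
      · intro hc; split_ifs at hc <;> exact absurd hc (by decide)
      · intro hc; exact absurd hc h
  have e1 : ∀ l, f l = 1 ↔ (l ≠ i ∧ x l = 1) := by
    intro l
    by_cases h : l = i
    · simp [hf, h]
    · simp only [hf, if_neg h]
      by_cases h2 : x l = 1 <;> simp [h2, h]
  have e2 : ∀ l, f l = 2 ↔ (l ≠ i ∧ x l ≠ 1) := by
    intro l
    by_cases h : l = i
    · simp [hf, h]
    · simp only [hf, if_neg h]
      by_cases h2 : x l = 1 <;> simp [h2, h]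
  have e0' : ∀ l, f' l = 0 ↔ l = j := by
    intro l
    by_cases h : l = j
    · simp [hf', h]
    · simp only [hf', if_neg h]
      constructor
      · intro hc; split_ifs at hc <;> exact absurd hc (by decide)
      · intro hc; exact absurd hc h
  have e1' : ∀ l, f' l = 1 ↔ (l ≠ j ∧ y l = 1) := by
    intro l
    by_cases h : l = j
    · simp [hf', h]
    · simp only [hf', if_neg h]
      by_cases h2 : y l = 1 <;> simp [h2, h]
  have e2' : ∀ l, f' l = 2 ↔ (l ≠ j ∧ y l ≠ 1) := by
    intro l
    by_cases h : l = j
    · simp [hf', h]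
    · simp only [hf', if_neg h]
      by_cases h2 : y l = 1 <;> simp [h2, h]
  have c0 : (univ.filter (fun l => f l = 0)).card = (univ.filter (fun l => f' l = 0)).card := by
    have hA : univ.filter (fun l => f l = 0) = {i} := by
      ext l; simp [e0]
    have hB : univ.filter (fun l => f' l = 0) = {j} := by
      ext l; simp [e0']
    rw [hA, hB]; simp
  have c1 : (univ.filter (fun l => f l = 1)).card = (univ.filter (fun l => f' l = 1)).card := by
    have hA : univ.filter (fun l => f l = 1) = univ.filter (fun l => l ≠ i ∧ x l = 1) := by
      ext l; simp [e1]
    have hB : univ.filter (fun l => f' l = 1) = univ.filter (fun l => l ≠ j ∧ y l = 1) := by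
      ext l; simp [e1']
    rw [hA, hB]; exact hk
  have hsumf : (univ : Finset (Fin n)).card
      = ∑ v : Fin 3, (univ.filter (fun l => f l = v)).card :=
    Finset.card_eq_sum_card_fiberwise (fun l _ => Finset.mem_univ (f l))
  have hsumf' : (univ : Finset (Fin n)).card
      = ∑ v : Fin 3, (univ.filter (fun l => f' l = v)).card :=
    Finset.card_eq_sum_card_fiberwise (fun l _ => Finset.mem_univ (f' l))
  rw [Fin.sum_univ_three] at hsumf hsumf'
  have c2 : (univ.filter (fun l => f l = 2)).card = (univ.filter (fun l => f' l = 2)).card := by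
    omega
  have hcard : ∀ v : Fin 3, (univ.filter (fun l => f l = v)).card
      = (univ.filter (fun l => f' l = v)).card := by
    intro v
    fin_cases v
    · exact c0
    · exact c1
    · exact c2
  have hfib : ∀ v : Fin 3, Fintype.card {l // f l = v} = Fintype.card {l // f' l = v} := by
    intro v
    simp only [Fintype.card_subtype]
    exact hcard v
  let σ : Equiv.Perm (Fin n) := Equiv.ofFiberEquiv (fun v => Fintype.equivOfCardEq (hfib v))
  have hσ : ∀ l, f' (σ l) = f l := fun l => Equiv.ofFiberEquiv_map _ l
  have hσi : σ i = j := by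
    have h1 : f' (σ i) = 0 := by rw [hσ i]; exact (e0 i).mpr rfl
    exact (e0' (σ i)).mp h1
  have hfin2 : ∀ a : Fin 2, a ≠ 1 → a = 0 := by decide
  have hxy : ∀ l, y (σ l) = x l := by
    intro l
    by_cases h : l = i
    · rw [h, hσi, ← hb]
    · by_cases h2 : x l = 1
      · have h3 : f' (σ l) = 1 := by rw [hσ l]; exact (e1 l).mpr ⟨h, h2⟩
        rw [((e1' (σ l)).mp h3).2, h2]
      · have h3 : f' (σ l) = 2 := by rw [hσ l]; exact (e2 l).mpr ⟨h, h2⟩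
        rw [hfin2 _ ((e2' (σ l)).mp h3).2, hfin2 _ h2]
  have hmain := hsym σ i x
  rw [hσi] at hmain
  have hcomp : x ∘ ⇑σ.symm = y := by
    funext m
    have := hxy (σ.symm m)
    simpa using this.symm
  rw [hcomp] at hmain
  exact hmain

/-- every weighted symmetric Boolean game (with positive weights
`μ`) is a weighted potential game with weights `1 / μ i`. -/
theorem stmt16 (n : ℕ) (hn : 1 ≤ n) (μ : Fin n → ℝ) (hμ : ∀ i, 0 < μ i)
    (c : Fin n → (Fin n → Fin 2) → ℝ)
    (hsym : ∀ (σ : Equiv.Perm (Fin n)) (i : Fin n) (x : Fin n → Fin 2),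
      μ i * c i x = μ (σ i) * c (σ i) (x ∘ ⇑σ.symm)) :
    ∃ P : (Fin n → Fin 2) → ℝ,
      ∀ (i : Fin n) (x y : Fin n → Fin 2), (∀ j, j ≠ i → x j = y j) →
        c i x - c i y = (1 / μ i) * (P x - P y) := by
  classical
  set ind : ℕ → (Fin n → Fin 2) := fun k l => if (l : ℕ) < k then 1 else 0 with hind
  set K : (Fin n → Fin 2) → ℕ := fun x => (univ.filter fun l => x l = 1).card with hKdef
  set Δ : ℕ → ℝ := fun m =>
    if h : m < n then μ ⟨m, h⟩ * (c ⟨m, h⟩ (ind (m + 1)) - c ⟨m, h⟩ (ind m)) else 0 with hΔ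
  refine ⟨fun x => ∑ m ∈ Finset.range (K x), Δ m, ?_⟩
  have key : ∀ (i : Fin n) (x y : Fin n → Fin 2), (∀ j, j ≠ i → x j = y j) →
      x i = 1 → y i = 0 →
      c i x - c i y
        = (1 / μ i) * ((∑ m ∈ Finset.range (K x), Δ m) - ∑ m ∈ Finset.range (K y), Δ m) := by
    intro i x y hxy hx1 hy0
    set k := (univ.filter fun l => l ≠ i ∧ x l = 1).card with hk
    have hky : (univ.filter fun l => l ≠ i ∧ y l = 1).card = k := by
      rw [hk]
      congr 1
      apply Finset.filter_congr
      intro l _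
      by_cases h : l = i
      · simp [h]
      · simp [h, hxy l h]
    have hkn : k < n := by
      have hsub : (univ.filter fun l => l ≠ i ∧ x l = 1) ⊆ univ.erase i := by
        intro l hl
        simp only [Finset.mem_filter] at hl
        exact Finset.mem_erase.mpr ⟨hl.2.1, Finset.mem_univ l⟩
      have h1 := Finset.card_le_card hsub
      rw [Finset.card_erase_of_mem (Finset.mem_univ i), Finset.card_univ, Fintype.card_fin] at h1
      omega
    have hKx : K x = k + 1 := by
      have : (univ.filter fun l => x l = 1)
          = insert i (univ.filter fun l => l ≠ i ∧ x l = 1) := by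
        ext l
        simp only [Finset.mem_filter, Finset.mem_insert, Finset.mem_univ, true_and]
        constructor
        · intro h
          by_cases hl : l = i
          · exact Or.inl hl
          · exact Or.inr ⟨hl, h⟩
        · rintro (h | ⟨_, h⟩)
          · rw [h]; exact hx1
          · exact h
      rw [hKdef]
      simp only [this]
      rw [Finset.card_insert_of_notMem (by simp)]
    have hKy : K y = k := by
      have : (univ.filter fun l => y l = 1) = (univ.filter fun l => l ≠ i ∧ y l = 1) := by
        ext l
        simp only [Finset.mem_filter, Finset.mem_univ, true_and]
        constructor
        · intro h
          refine ⟨fun hl => ?_, h⟩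
          rw [hl, hy0] at h
          exact absurd h (by decide)
        · exact fun h => h.2
      rw [hKdef]; simp only [this]; exact hky
    have hfilter1 : (univ.filter fun l : Fin n => l ≠ ⟨k, hkn⟩ ∧ ind (k + 1) l = 1)
        = univ.filter (fun l : Fin n => (l : ℕ) < k) := by
      ext l
      simp only [Finset.mem_filter, Finset.mem_univ, true_and, hind, ne_eq, Fin.ext_iff]
      constructor
      · rintro ⟨h1, h2⟩
        split_ifs at h2 with h3
        · omega
        · exact absurd h2 (by decide)
      · intro h
        refine ⟨by omega, ?_⟩
        rw [if_pos (by omega)]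
    have hfilter2 : (univ.filter fun l : Fin n => l ≠ ⟨k, hkn⟩ ∧ ind k l = 1)
        = univ.filter (fun l : Fin n => (l : ℕ) < k) := by
      ext l
      simp only [Finset.mem_filter, Finset.mem_univ, true_and, hind, ne_eq, Fin.ext_iff]
      constructor
      · rintro ⟨h1, h2⟩
        split_ifs at h2 with h3
        · omega
        · exact absurd h2 (by decide)
      · intro h
        refine ⟨by omega, ?_⟩
        rw [if_pos h]
    have hx' : μ i * c i x = μ ⟨k, hkn⟩ * c ⟨k, hkn⟩ (ind (k + 1)) := by
      apply aux_eq n μ c hsym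
      · rw [hx1, hind]
        simp
      · rw [← hk, hfilter1, card_lt_aux n k (le_of_lt hkn)]
    have hy' : μ i * c i y = μ ⟨k, hkn⟩ * c ⟨k, hkn⟩ (ind k) := by
      apply aux_eq n μ c hsym
      · rw [hy0, hind]
        simp
      · rw [hky, hfilter2, card_lt_aux n k (le_of_lt hkn)]
    have hsum : (∑ m ∈ Finset.range (K x), Δ m) - (∑ m ∈ Finset.range (K y), Δ m) = Δ k := by
      rw [hKx, hKy, Finset.sum_range_succ]
      ring
    rw [hsum, hΔ]
    simp only [dif_pos hkn]
    have hμi : μ i ≠ 0 := (hμ i).ne'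
    field_simp
    linarith [hx', hy']
  intro i x y hxy
  have hfin2 : ∀ a : Fin 2, a = 0 ∨ a = 1 := by decide
  rcases hfin2 (x i) with h1 | h1 <;> rcases hfin2 (y i) with h2 | h2
  · have : x = y := funext fun j => by
      by_cases hj : j = i
      · rw [hj, h1, h2]
      · exact hxy j hj
    simp [this]
  · have hk := key i y x (fun j hj => (hxy j hj).symm) h2 h1
    linear_combination -hk
  · exact key i x y hxy h1 h2
  · have : x = y := funext fun j => by
      by_cases hj : j = i
      · rw [hj, h1, h2]
      · exact hxy j hj
    simp [this]
end

section
/- Every renaming symmetric Boolean game is an exact potential game: if n ≥ 1, c : Fin n → ((Fin n → Fin 2) → ℝ), and there exists a renaming r : Fin n → Equiv.Perm (Fin 2) such that the renamed game c^r i x := c i (fun j => (r j)⁻¹ (x j)) is ordinary symmetric, then there exists P : (Fin n → Fin 2) → ℝ such that for every player i and all profiles x, y with x j = y j for all j ≠ i, c i x − c i y = P x − P y. -/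
open Finset

lemma fin2_cases (a : Fin 2) : a = 0 ∨ a = 1 := by omega

lemma exists_perm {n : ℕ} (f g : Fin n → Fin 2) (i i' : Fin n)
    (hfi : f i = g i')
    (hc : (univ.filter (fun j => j ≠ i ∧ f j = 1)).card
        = (univ.filter (fun j => j ≠ i' ∧ g j = 1)).card) :
    ∃ σ : Equiv.Perm (Fin n), σ i = i' ∧ ∀ j, g (σ j) = f j := by
  classical
  set S1 := univ.filter (fun j => j ≠ i ∧ f j = 1) with hS1
  set S0 := univ.filter (fun j => j ≠ i ∧ f j = 0) with hS0
  set T1 := univ.filter (fun j => j ≠ i' ∧ g j = 1) with hT1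
  set T0 := univ.filter (fun j => j ≠ i' ∧ g j = 0) with hT0
  have hsplit : ∀ (h : Fin n → Fin 2) (p : Fin n),
      (univ.filter (fun j => j ≠ p ∧ h j = 1)).card
      + (univ.filter (fun j => j ≠ p ∧ h j = 0)).card = n - 1 := by
    intro h p
    rw [← Finset.card_union_of_disjoint]
    · have : (univ.filter (fun j => j ≠ p ∧ h j = 1))
          ∪ (univ.filter (fun j => j ≠ p ∧ h j = 0)) = univ.erase p := by
        ext j
        simp only [Finset.mem_union, Finset.mem_filter, Finset.mem_univ, true_and,
          Finset.mem_erase]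
        rcases fin2_cases (h j) with h' | h' <;> simp [h']
      rw [this, Finset.card_erase_of_mem (Finset.mem_univ p), Finset.card_univ,
        Fintype.card_fin]
    · rw [Finset.disjoint_left]
      intro j hj hj'
      simp only [Finset.mem_filter] at hj hj'
      rw [hj.2.2] at hj'
      exact absurd hj'.2.2 (by decide)
  have hc0 : S0.card = T0.card := by
    have h1 := hsplit f i
    have h2 := hsplit g i'
    rw [← hS1, ← hS0] at h1
    rw [← hT1, ← hT0] at h2
    omega
  set e1 := Finset.equivOfCardEq hc with he1
  set e0 := Finset.equivOfCardEq hc0 with he0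
  have memS1 : ∀ {j}, j ≠ i → f j = 1 → j ∈ S1 := by
    intro j h1 h2; simp [hS1, h1, h2]
  have memS0 : ∀ {j}, j ≠ i → f j ≠ 1 → j ∈ S0 := by
    intro j h1 h2; rcases fin2_cases (f j) with h'|h'
    · simp [hS0, h1, h']
    · exact absurd h' h2
  set φ : Fin n → Fin n := fun j =>
    if h : j = i then i'
    else if h1 : f j = 1 then (e1 ⟨j, memS1 h h1⟩ : Fin n)
    else (e0 ⟨j, memS0 h h1⟩ : Fin n) with hφ
  have hT1mem : ∀ (x : T1), ((x : Fin n) ≠ i' ∧ g x = 1) := by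
    intro x
    have := x.2
    simp only [hT1, Finset.mem_filter] at this
    exact this.2
  have hT0mem : ∀ (x : T0), ((x : Fin n) ≠ i' ∧ g x = 0) := by
    intro x
    have := x.2
    simp only [hT0, Finset.mem_filter] at this
    exact this.2
  have hφval : ∀ (j : Fin n) (h : j ≠ i),
      (∀ (h1 : f j = 1), φ j = (e1 ⟨j, memS1 h h1⟩ : Fin n))
      ∧ (∀ (h1 : f j ≠ 1), φ j = (e0 ⟨j, memS0 h h1⟩ : Fin n)) := by
    intro j h
    constructor
    · intro h1; simp only [hφ]; rw [dif_neg h, dif_pos h1]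
    · intro h1; simp only [hφ]; rw [dif_neg h, dif_neg h1]
  have hinj : Function.Injective φ := by
    intro a b hab
    by_cases ha : a = i <;> by_cases hb : b = i
    · rw [ha, hb]
    · exfalso
      rw [ha, show φ i = i' by simp [hφ]] at hab
      by_cases h1 : f b = 1
      · rw [(hφval b hb).1 h1] at hab
        exact (hT1mem _).1 hab.symm
      · rw [(hφval b hb).2 h1] at hab
        exact (hT0mem _).1 hab.symm
    · exfalso
      rw [hb, show φ i = i' by simp [hφ]] at hab
      by_cases h1 : f a = 1
      · rw [(hφval a ha).1 h1] at hab
        exact (hT1mem _).1 hab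
      · rw [(hφval a ha).2 h1] at hab
        exact (hT0mem _).1 hab
    · by_cases h1 : f a = 1 <;> by_cases h2 : f b = 1
      · rw [(hφval a ha).1 h1, (hφval b hb).1 h2] at hab
        have := e1.injective (Subtype.coe_injective hab)
        exact Subtype.mk_eq_mk.mp this
      · exfalso
        rw [(hφval a ha).1 h1, (hφval b hb).2 h2] at hab
        have u1 := (hT1mem (e1 ⟨a, memS1 ha h1⟩)).2
        have u0 := (hT0mem (e0 ⟨b, memS0 hb h2⟩)).2
        rw [hab, u0] at u1; exact absurd u1 (by decide)
      · exfalso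
        rw [(hφval a ha).2 h1, (hφval b hb).1 h2] at hab
        have u1 := (hT1mem (e1 ⟨b, memS1 hb h2⟩)).2
        have u0 := (hT0mem (e0 ⟨a, memS0 ha h1⟩)).2
        rw [← hab, u0] at u1; exact absurd u1 (by decide)
      · rw [(hφval a ha).2 h1, (hφval b hb).2 h2] at hab
        have := e0.injective (Subtype.coe_injective hab)
        exact Subtype.mk_eq_mk.mp this
  have hbij : Function.Bijective φ := Finite.injective_iff_bijective.mp hinj
  refine ⟨Equiv.ofBijective φ hbij, ?_, ?_⟩
  · show φ i = i'
    simp [hφ]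
  · intro j
    show g (φ j) = f j
    by_cases h : j = i
    · rw [h, show φ i = i' by simp [hφ], ← hfi]
    · by_cases h1 : f j = 1
      · rw [(hφval j h).1 h1, (hT1mem _).2, h1]
      · rw [(hφval j h).2 h1, (hT0mem _).2]
        rcases fin2_cases (f j) with h'|h'
        · exact h'.symm
        · exact absurd h' h1
open Finset

lemma card_canon {n k : ℕ} (hn : 1 ≤ n) (hk : k ≤ n - 1) (a : Fin 2) :
    (univ.filter (fun j : Fin n => j ≠ (⟨0, hn⟩ : Fin n)
      ∧ (if j = (⟨0, hn⟩ : Fin n) then a else if j.val ≤ k then (1 : Fin 2) else 0) = 1)).card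
    = k := by
  have hpred : ∀ j : Fin n, (j ≠ (⟨0, hn⟩ : Fin n)
      ∧ (if j = (⟨0, hn⟩ : Fin n) then a else if j.val ≤ k then (1 : Fin 2) else 0) = 1)
      ↔ (1 ≤ j.val ∧ j.val ≤ k) := by
    intro j
    by_cases h : j = (⟨0, hn⟩ : Fin n)
    · simp [h]
    · have h0 : 1 ≤ j.val := by
        rcases Nat.eq_zero_or_pos j.val with h'|h'
        · exact absurd (Fin.ext h') h
        · exact h'
      simp only [h, if_false, ne_eq, not_false_iff, true_and, h0]
      by_cases h2 : j.val ≤ k <;> simp [h2]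
  rw [Finset.filter_congr (fun j _ => hpred j)]
  have himg : (univ.filter (fun j : Fin n => 1 ≤ j.val ∧ j.val ≤ k)).image Fin.val
      = Finset.Icc 1 k := by
    ext m
    simp only [Finset.mem_image, Finset.mem_filter, Finset.mem_univ, true_and,
      Finset.mem_Icc]
    constructor
    · rintro ⟨j, hj, rfl⟩; exact hj
    · rintro ⟨h1, h2⟩
      exact ⟨⟨m, by omega⟩, ⟨h1, h2⟩, rfl⟩
  have := Finset.card_image_of_injective
    (univ.filter (fun j : Fin n => 1 ≤ j.val ∧ j.val ≤ k)) Fin.val_injective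
  rw [himg] at this
  rw [← this, Nat.card_Icc]
  omega

/-- every renaming symmetric Boolean game is an exact potential
game: if some renamed game `c^r i x = c i (fun j => (r j)⁻¹ (x j))` is
ordinary symmetric, then `c` has an exact potential function. -/
theorem stmt18 (n : ℕ) (hn : 1 ≤ n) (c : Fin n → (Fin n → Fin 2) → ℝ)
    (h : ∃ r : Fin n → Equiv.Perm (Fin 2),
      ∀ (σ : Equiv.Perm (Fin n)) (i : Fin n) (x : Fin n → Fin 2),
        c i (fun j => (r j)⁻¹ (x j))
          = c (σ i) (fun j => (r j)⁻¹ ((x ∘ ⇑σ.symm) j))) :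
    ∃ P : (Fin n → Fin 2) → ℝ,
      ∀ (i : Fin n) (x y : Fin n → Fin 2), (∀ j, j ≠ i → x j = y j) →
        c i x - c i y = P x - P y := by
  classical
  obtain ⟨r, hr⟩ := h
  set d : Fin n → (Fin n → Fin 2) → ℝ :=
    fun i x => c i (fun j => (r j)⁻¹ (x j)) with hd
  have hsym : ∀ (σ : Equiv.Perm (Fin n)) (i : Fin n) (x : Fin n → Fin 2),
      d i x = d (σ i) (x ∘ ⇑σ.symm) := fun σ i x => hr σ i x
  have hcd : ∀ (i : Fin n) (x : Fin n → Fin 2),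
      c i x = d i (fun j => r j (x j)) := by
    intro i x
    simp [hd]
  set p0 : Fin n := ⟨0, hn⟩ with hp0
  set Z : Fin 2 → ℕ → Fin n → Fin 2 :=
    fun a k j => if j = p0 then a else if j.val ≤ k then 1 else 0 with hZ
  set w : ℕ → ℝ := fun k => d p0 (Z 1 k) - d p0 (Z 0 k) with hw
  set cnt : (Fin n → Fin 2) → ℕ :=
    fun x => (univ.filter (fun j => x j = 1)).card with hcnt
  set P : (Fin n → Fin 2) → ℝ := fun x => ∑ k ∈ Finset.range (cnt x), w k with hP
  -- main step: flipping player i from 0 to 1 changes d i by w k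
  have main : ∀ (i : Fin n) (x y : Fin n → Fin 2), (∀ j, j ≠ i → x j = y j) →
      x i = 1 → y i = 0 → d i x - d i y = P x - P y := by
    intro i x y hxy hx1 hy0
    set k := (univ.filter (fun j => j ≠ i ∧ x j = 1)).card with hk
    have hkle : k ≤ n - 1 := by
      have hsub : (univ.filter (fun j => j ≠ i ∧ x j = 1)) ⊆ univ.erase i := by
        intro j hj
        simp only [Finset.mem_filter] at hj
        exact Finset.mem_erase.mpr ⟨hj.2.1, Finset.mem_univ j⟩
      have := Finset.card_le_card hsub
      rwa [Finset.card_erase_of_mem (Finset.mem_univ i), Finset.card_univ,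
        Fintype.card_fin] at this
    have hcntx : cnt x = k + 1 := by
      have : (univ.filter (fun j => x j = 1))
          = insert i (univ.filter (fun j => j ≠ i ∧ x j = 1)) := by
        ext j
        simp only [Finset.mem_filter, Finset.mem_univ, true_and, Finset.mem_insert]
        by_cases hj : j = i
        · simp [hj, hx1]
        · simp [hj]
      show (univ.filter (fun j => x j = 1)).card = k + 1
      rw [this, Finset.card_insert_of_notMem (by simp)]
    have hcnty : cnt y = k := by
      have : (univ.filter (fun j => y j = 1))
          = (univ.filter (fun j => j ≠ i ∧ x j = 1)) := by
        ext j
        simp only [Finset.mem_filter, Finset.mem_univ, true_and]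
        by_cases hj : j = i
        · simp [hj, hy0]
        · simp [hj, hxy j hj]
      show (univ.filter (fun j => y j = 1)).card = k
      rw [this]
    -- find the permutation carrying the canonical profile to x
    obtain ⟨σ, hσ1, hσ2⟩ := exists_perm (Z 1 k) x p0 i
      (by simp [hZ, hx1])
      (by rw [hk]; exact card_canon hn hkle 1)
    have hdx : d p0 (Z 1 k) = d i x := by
      rw [hsym σ p0 (Z 1 k), hσ1]
      congr 1
      funext m
      rw [Function.comp_apply, ← hσ2 (σ.symm m), Equiv.apply_symm_apply]
    have hdy : d p0 (Z 0 k) = d i y := by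
      rw [hsym σ p0 (Z 0 k), hσ1]
      congr 1
      funext m
      rw [Function.comp_apply]
      set j := σ.symm m with hj
      have hm : m = σ j := by rw [hj, Equiv.apply_symm_apply]
      by_cases hjp : j = p0
      · rw [hjp]
        have : m = i := by rw [hm, hjp, hσ1]
        rw [this, hy0]
        simp [hZ]
      · have hz : Z 0 k j = Z 1 k j := by simp [hZ, hjp]
        have hmi : m ≠ i := by
          rw [hm, ← hσ1]
          exact fun hc => hjp (σ.injective hc)
        rw [hz, ← hσ2 j, ← hm, hxy m hmi]
    show d i x - d i y = (∑ k ∈ Finset.range (cnt x), w k) - ∑ k ∈ Finset.range (cnt y), w k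
    rw [hcntx, hcnty, Finset.sum_range_succ, ← hdx, ← hdy]
    show d p0 (Z 1 k) - d p0 (Z 0 k) = _ + (d p0 (Z 1 k) - d p0 (Z 0 k)) - _
    ring
  -- derive the full property for d
  have keyd : ∀ (i : Fin n) (x y : Fin n → Fin 2), (∀ j, j ≠ i → x j = y j) →
      d i x - d i y = P x - P y := by
    intro i x y hxy
    by_cases hxyi : x i = y i
    · have : x = y := by
        funext j
        by_cases hj : j = i
        · rw [hj]; exact hxyi
        · exact hxy j hj
      rw [this]
      ring
    · rcases fin2_cases (x i) with hx | hx <;> rcases fin2_cases (y i) with hy | hy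
      · exact absurd (hx.trans hy.symm) hxyi
      · have := main i y x (fun j hj => (hxy j hj).symm) hy hx
        linarith
      · exact main i x y hxy hx hy
      · exact absurd (hx.trans hy.symm) hxyi
  refine ⟨fun x => P (fun j => r j (x j)), ?_⟩
  intro i x y hxy
  rw [hcd i x, hcd i y]
  exact keyd i _ _ (fun j hj => by rw [hxy j hj])
end

section
/- Every negation-symmetric Boolean game is an exact potential game, with an explicit potential: let n ≥ 1, write 1 for the first player, let ¬ denote the nontrivial permutation of Fin 2, and let c : Fin n → ((Fin n → Fin 2) → ℝ) satisfy, for every player i ≠ 1 and every profile x, c i x' = c 1 x, where x' is the profile obtained from x by negating its coordinates at players 1 and i (x'_1 = ¬x_1, x'_i = ¬x_i, and x'_j = x_j for j ∉ {1,i}). Then the function P(x) := − c 1 x'' — where x'' is x with only its first coordinate negated — is an exact potential function: for every player i and all profiles x, y with x j = y j for all j ≠ i, c i x − c i y = P x − P y. -/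
/-- every negation-symmetric Boolean game is an exact potential
game, with explicit potential `P x = - c 1 x''` where `x''` is `x` with its
first coordinate negated. Here player `1` is the index `0` of `Fin n`, and
negation is the nontrivial permutation `Equiv.swap 0 1` of `Fin 2`.
Negation-symmetry: for every `i ≠ 1` and profile `x`, the payoff `c i` at the
profile obtained from `x` by negating coordinates `1` and `i` equals `c 1 x`. -/
theorem stmt19 (n : ℕ) (hn : 1 ≤ n) (c : Fin n → (Fin n → Fin 2) → ℝ)
    (hneg : ∀ i : Fin n, i ≠ ⟨0, hn⟩ → ∀ x : Fin n → Fin 2,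
      c i (Function.update
            (Function.update x ⟨0, hn⟩ (Equiv.swap (0 : Fin 2) 1 (x ⟨0, hn⟩)))
            i (Equiv.swap (0 : Fin 2) 1 (x i)))
        = c ⟨0, hn⟩ x) :
    ∀ (i : Fin n) (x y : Fin n → Fin 2), (∀ j, j ≠ i → x j = y j) →
      c i x - c i y
        = (-(c ⟨0, hn⟩
              (Function.update x ⟨0, hn⟩ (Equiv.swap (0 : Fin 2) 1 (x ⟨0, hn⟩)))))
          - (-(c ⟨0, hn⟩
              (Function.update y ⟨0, hn⟩ (Equiv.swap (0 : Fin 2) 1 (y ⟨0, hn⟩))))) := by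
  intro i x y hxy
  set p : Fin n := ⟨0, hn⟩ with hp
  set s := Equiv.swap (0 : Fin 2) 1 with hs
  by_cases hxyi : x i = y i
  · have hxyeq : x = y := by
      funext j
      by_cases h : j = i
      · subst h; exact hxyi
      · exact hxy j h
    subst hxyeq; ring
  · have hswap : ∀ a b : Fin 2, a ≠ b → s a = b := by decide
    have hss : ∀ a : Fin 2, s (s a) = a := by decide
    have hy : y = Function.update x i (s (x i)) := by
      funext j
      by_cases h : j = i
      · subst h; simp only [Function.update_self]; exact (hswap _ _ hxyi).symm
      · rw [Function.update_of_ne h]; exact (hxy j h).symm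
    by_cases hip : i = p
    · have h1 : Function.update x p (s (x p)) = y := by rw [← hip]; exact hy.symm
      have h2 : Function.update y p (s (y p)) = x := by
        funext j
        by_cases h : j = p
        · subst h; simp [hy, hip, hss]
        · simp [Function.update_of_ne h]
          exact (hxy j (by rw [hip]; exact h)).symm
      rw [h1, h2, hip]; ring
    · have hpi : p ≠ i := fun hh => hip hh.symm
      have key1 : c p (Function.update x p (s (x p))) = c i y := by
        rw [← hneg i hip (Function.update x p (s (x p)))]
        congr 1
        funext j
        by_cases h : j = i
        · subst h
          simp [Function.update_self, Function.update_of_ne hip, hy]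
        · by_cases h2 : j = p
          · subst h2
            simp [Function.update_of_ne hpi, Function.update_self, hss,
              hxy p hpi]
          · simp [Function.update_of_ne h, Function.update_of_ne h2, hxy j h]
      have key2 : c p (Function.update y p (s (y p))) = c i x := by
        rw [← hneg i hip (Function.update y p (s (y p)))]
        congr 1
        funext j
        by_cases h : j = i
        · subst h
          simp [Function.update_self, Function.update_of_ne hip, hy, hss]
        · by_cases h2 : j = p
          · subst h2
            simp [Function.update_of_ne hpi, Function.update_self, hss,
              (hxy p hpi).symm]
          · simp [Function.update_of_ne h, Function.update_of_ne h2,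
              (hxy j h).symm]
      rw [key1, key2]; ring
end
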